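/- arXiv:1005.3678 — 2 statements merged into one kernel-verified Lean document; each statement's English description precedes it below -/
import Mathlib

section
/- Let E be an S-dominating effect algebra and S ⊆ S(E). If the join of S computed in the poset S(E) exists, then it is also the join of S computed in E. -/
universe u v

/-- An effect algebra: a partial algebra `(E; ⊕, 0, 1)` with `0 ≠ 1`, where `⊕` is
partially defined (domain `D`), commutative and associative where defined, every
element has a unique orthosupplement (`compl`, skolemizing axiom (Eiii)), and
`1 ⊕ x` defined implies `x = 0`. -/
structure EffectAlgebra (E : Type u) where
  D : E → E → Prop
  oplus : E → E → E
  zero : E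
  one : E
  zero_ne_one : zero ≠ one
  D_comm : ∀ x y, D x y → D y x
  oplus_comm : ∀ x y, D x y → oplus x y = oplus y x
  assoc : ∀ x y z, D x y → D (oplus x y) z →
      D y z ∧ D x (oplus y z) ∧ oplus (oplus x y) z = oplus x (oplus y z)
  assoc' : ∀ x y z, D y z → D x (oplus y z) →
      D x y ∧ D (oplus x y) z ∧ oplus (oplus x y) z = oplus x (oplus y z)
  compl : E → E
  D_compl : ∀ x, D x (compl x)
  oplus_compl : ∀ x, oplus x (compl x) = one
  compl_unique : ∀ x y, D x y → oplus x y = one → y = compl x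
  one_max : ∀ x, D one x → x = zero

namespace EffectAlgebra

variable {E : Type u} (A : EffectAlgebra E)

/-- The induced order: `x ≤ y` iff `x ⊕ z = y` for some `z`. -/
def le (x y : E) : Prop := ∃ z, A.D x z ∧ A.oplus x z = y

def IsLB (S : Set E) (m : E) : Prop := ∀ x ∈ S, A.le m x
def IsUB (S : Set E) (m : E) : Prop := ∀ x ∈ S, A.le x m

/-- `m` is the infimum of `S` computed within the subposet `P`. -/
def IsInfIn (P : Set E) (S : Set E) (m : E) : Prop :=
  m ∈ P ∧ A.IsLB S m ∧ ∀ z ∈ P, A.IsLB S z → A.le z m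

/-- `m` is the supremum of `S` computed within the subposet `P`. -/
def IsSupIn (P : Set E) (S : Set E) (m : E) : Prop :=
  m ∈ P ∧ A.IsUB S m ∧ ∀ z ∈ P, A.IsUB S z → A.le m z

/-- `w` is sharp iff the meet `w ∧ w'` exists in `E` and equals `0`. -/
def Sharp (w : E) : Prop := A.IsInfIn Set.univ {w, A.compl w} A.zero

/-- The set `S(E)` of sharp elements. -/
def sharpSet : Set E := {w | A.Sharp w}

def HasMeet (x y : E) : Prop := ∃ m, A.IsInfIn Set.univ {x, y} m
def HasJoin (x y : E) : Prop := ∃ j, A.IsSupIn Set.univ {x, y} j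

/-- Every `x` has a least sharp element above it, which is the infimum of the sharp
elements above `x` both in `E` and in `S(E)`. -/
def SharplyDominating : Prop :=
  ∀ x : E, ∃ w, A.Sharp w ∧ A.le x w ∧
    A.IsInfIn Set.univ {v | A.Sharp v ∧ A.le x v} w ∧
    A.IsInfIn A.sharpSet {v | A.Sharp v ∧ A.le x v} w

/-- Sharply dominating, and `x ∧ w` exists for every `x ∈ E`, `w ∈ S(E)`. -/
def SDominating : Prop :=
  A.SharplyDominating ∧ ∀ x w : E, A.Sharp w → A.HasMeet x w

end EffectAlgebra

/-- `SumDef A l s` : the orthosum of the finite list `l` is defined and equals `s`. -/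
inductive EffectAlgebra.SumDef {E : Type u} (A : EffectAlgebra E) : List E → E → Prop
  | nil : EffectAlgebra.SumDef A [] A.zero
  | cons {x : E} {l : List E} {s : E} : EffectAlgebra.SumDef A l s → A.D x s →
      EffectAlgebra.SumDef A (x :: l) (A.oplus x s)

namespace EffectAlgebra

variable {E : Type u} (A : EffectAlgebra E)

/-- A family is orthogonal iff every finite subfamily has a defined orthosum. -/
def Orthogonal {ι : Type v} (x : ι → E) : Prop :=
  ∀ l : List ι, l.Nodup → ∃ s, A.SumDef (l.map x) s

/-- The set of finite partial orthosums of a family. -/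
def finiteSums {ι : Type v} (x : ι → E) : Set E :=
  {s | ∃ l : List ι, l.Nodup ∧ A.SumDef (l.map x) s}

/-- `v = ⊕ x` : the family is orthogonal and `v` is the supremum in `E` of all
finite partial orthosums. -/
def HasOrthoSum {ι : Type v} (x : ι → E) (v : E) : Prop :=
  A.Orthogonal x ∧ A.IsSupIn Set.univ (A.finiteSums x) v

/-- Every family dominated elementwise by an orthogonal family of sharp
elements has an orthosum. -/
def SharplyOrthocomplete : Prop :=
  ∀ (ι : Type u) (x w : ι → E), (∀ k, A.Sharp (w k)) → A.Orthogonal w →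
    (∀ k, A.le (x k) (w k)) → ∃ v, A.HasOrthoSum x v

/-- `c` is central: for every `y` the meets `y ∧ c`, `y ∧ c'` exist and
`y = (y ∧ c) ∨ (y ∧ c')`. -/
def Central (c : E) : Prop :=
  ∀ y : E, ∃ m₁ m₂, A.IsInfIn Set.univ {y, c} m₁ ∧
    A.IsInfIn Set.univ {y, A.compl c} m₂ ∧ A.IsSupIn Set.univ {m₁, m₂} y

/-- The center `C(E)`. -/
def centerSet : Set E := {c | A.Central c}

def CentrallyDominating : Prop :=
  ∀ x : E, ∃ c, A.Central c ∧ A.le x c ∧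
    A.IsInfIn Set.univ {d | A.Central d ∧ A.le x d} c ∧
    A.IsInfIn A.centerSet {d | A.Central d ∧ A.le x d} c

def CentrallyOrthocomplete : Prop :=
  ∀ (ι : Type u) (x c : ι → E), (∀ k, A.Central (c k)) → A.Orthogonal c →
    (∀ k, A.le (x k) (c k)) → ∃ v, A.HasOrthoSum x v

/-- `P` is bifull in `E`: for `S ⊆ P`, the join of `S` in `P` exists iff the join
of `S` in `E` exists, and then they coincide. -/
def Bifull (P : Set E) : Prop :=
  ∀ S ⊆ P, (∀ s, A.IsSupIn P S s → A.IsSupIn Set.univ S s) ∧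
    (∀ s, A.IsSupIn Set.univ S s → A.IsSupIn P S s)

/-- The subposet `P` is a complete lattice: every subset of `P` has a supremum
(and an infimum) computed within `P`. -/
def CompleteIn (P : Set E) : Prop :=
  ∀ S ⊆ P, (∃ s, A.IsSupIn P S s) ∧ (∃ m, A.IsInfIn P S m)

/-- `E` is a complete lattice. -/
def Complete : Prop :=
  ∀ S : Set E, (∃ s, A.IsSupIn Set.univ S s) ∧ (∃ m, A.IsInfIn Set.univ S m)

/-- The induced order of `E` is a lattice. -/
def LatticeOrdered : Prop := ∀ x y : E, A.HasMeet x y ∧ A.HasJoin x y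

/-- `x ↔ y` : `x ∨ y = x ⊕ (y ⊖ (x ∧ y))`. -/
def Compatible (x y : E) : Prop :=
  ∃ m j z, A.IsInfIn Set.univ {x, y} m ∧ A.IsSupIn Set.univ {x, y} j ∧
    A.D m z ∧ A.oplus m z = y ∧ A.D x z ∧ A.oplus x z = j

/-- An MV-effect algebra: a lattice effect algebra all of whose pairs of elements
are compatible. -/
def MV : Prop := A.LatticeOrdered ∧ ∀ x y : E, A.Compatible x y

/-- `nx = x ⊕ ⋯ ⊕ x` (`n` times) is defined. -/
def nTimesDef (n : ℕ) (x : E) : Prop := ∃ s, A.SumDef (List.replicate n x) s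

/-- `ord x < ∞` for every nonzero `x`. -/
def IsArchimedean : Prop := ∀ x : E, x ≠ A.zero → ∃ n : ℕ, ¬ A.nTimesDef n x

def Atom (a : E) : Prop := a ≠ A.zero ∧ ∀ b, A.le b a → b = A.zero ∨ b = a

def Atomic : Prop := ∀ x : E, x ≠ A.zero → ∃ a, A.Atom a ∧ A.le a x

/-- The subposet `P` (closed under `'`) is an orthomodular lattice. -/
def OrthomodularIn (P : Set E) : Prop :=
  (∀ x ∈ P, ∀ y ∈ P, (∃ m, A.IsInfIn P {x, y} m) ∧ (∃ j, A.IsSupIn P {x, y} j)) ∧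
  A.zero ∈ P ∧ A.one ∈ P ∧ (∀ x ∈ P, A.compl x ∈ P) ∧
  (∀ x ∈ P, A.IsInfIn P {x, A.compl x} A.zero ∧ A.IsSupIn P {x, A.compl x} A.one) ∧
  (∀ x ∈ P, ∀ y ∈ P, A.le x y →
    ∃ m, A.IsInfIn P {y, A.compl x} m ∧ A.IsSupIn P {x, m} y)

def DistributiveIn (P : Set E) : Prop :=
  ∀ x ∈ P, ∀ y ∈ P, ∀ z ∈ P, ∀ jyz mxy mxz m : E,
    A.IsSupIn P {y, z} jyz → A.IsInfIn P {x, y} mxy → A.IsInfIn P {x, z} mxz →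
    A.IsInfIn P {x, jyz} m → A.IsSupIn P {mxy, mxz} m

/-- The subposet `P` is a Boolean algebra (complemented distributive lattice with
bounds, complement given by `'`). -/
def BooleanIn (P : Set E) : Prop :=
  (∀ x ∈ P, ∀ y ∈ P, (∃ m, A.IsInfIn P {x, y} m) ∧ (∃ j, A.IsSupIn P {x, y} j)) ∧
  A.zero ∈ P ∧ A.one ∈ P ∧ (∀ x ∈ P, A.compl x ∈ P) ∧
  (∀ x ∈ P, A.IsInfIn P {x, A.compl x} A.zero ∧ A.IsSupIn P {x, A.compl x} A.one) ∧
  A.DistributiveIn P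

/-- A block: a maximal set of pairwise compatible elements. -/
def Block (M : Set E) : Prop :=
  (∀ x ∈ M, ∀ y ∈ M, A.Compatible x y) ∧
  ∀ N : Set E, M ⊆ N → (∀ x ∈ N, ∀ y ∈ N, A.Compatible x y) → N = M

def AtomIn (M : Set E) (a : E) : Prop :=
  a ∈ M ∧ a ≠ A.zero ∧ ∀ b ∈ M, A.le b a → b = A.zero ∨ b = a

def AtomicIn (M : Set E) : Prop :=
  ∀ x ∈ M, x ≠ A.zero → ∃ a, A.AtomIn M a ∧ A.le a x

end EffectAlgebra

namespace EffectAlgebra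

variable {E : Type u} (A : EffectAlgebra E)

lemma compl_compl' (x : E) : A.compl (A.compl x) = x := by
  have h2 : A.oplus (A.compl x) x = A.one := by
    rw [← A.oplus_comm x (A.compl x) (A.D_compl x)]; exact A.oplus_compl x
  exact (A.compl_unique (A.compl x) x (A.D_comm _ _ (A.D_compl x)) h2).symm

lemma compl_one' : A.compl A.one = A.zero :=
  A.one_max _ (A.D_compl A.one)

lemma D_one_zero : A.D A.one A.zero := by
  have := A.D_compl A.one; rwa [A.compl_one'] at this

lemma oplus_one_zero : A.oplus A.one A.zero = A.one := by
  have := A.oplus_compl A.one; rwa [A.compl_one'] at this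

lemma D_zero' (x : E) : A.D (A.compl x) A.zero := by
  have h1 : A.D (A.oplus x (A.compl x)) A.zero := by
    rw [A.oplus_compl x]; exact A.D_one_zero
  exact (A.assoc x (A.compl x) A.zero (A.D_compl x) h1).1

lemma D_zero (x : E) : A.D x A.zero := by
  have := A.D_zero' (A.compl x); rwa [A.compl_compl'] at this

lemma zero_oplus (x : E) : A.oplus A.zero x = x := by
  have hD : A.D A.zero (A.oplus x (A.compl x)) := by
    rw [A.oplus_compl x]; exact A.D_comm _ _ A.D_one_zero
  obtain ⟨h1, h2, h3⟩ := A.assoc' A.zero x (A.compl x) (A.D_compl x) hD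
  rw [A.oplus_compl x, A.oplus_comm A.zero A.one (A.D_comm _ _ A.D_one_zero),
    A.oplus_one_zero] at h3
  have := A.compl_unique (A.oplus A.zero x) (A.compl x) h2 h3
  calc A.oplus A.zero x = A.compl (A.compl (A.oplus A.zero x)) :=
        (A.compl_compl' _).symm
    _ = A.compl (A.compl x) := by rw [← this]
    _ = x := A.compl_compl' x

lemma oplus_zero (x : E) : A.oplus x A.zero = x := by
  rw [A.oplus_comm x A.zero (A.D_zero x), A.zero_oplus]

lemma le_refl (x : E) : A.le x x := ⟨A.zero, A.D_zero x, A.oplus_zero x⟩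

lemma le_trans {x y z : E} (h1 : A.le x y) (h2 : A.le y z) : A.le x z := by
  obtain ⟨a, ha, rfl⟩ := h1
  obtain ⟨b, hb, rfl⟩ := h2
  obtain ⟨hab, hx, he⟩ := A.assoc x a b ha hb
  exact ⟨A.oplus a b, hx, he.symm⟩

/-- If `x ≤ y` then `y' ≤ x'`. -/
lemma compl_le_compl {x y : E} (h : A.le x y) : A.le (A.compl y) (A.compl x) := by
  obtain ⟨c, hc, rfl⟩ := h
  set y := A.oplus x c with hy
  have hD : A.D y (A.compl y) := A.D_compl y
  obtain ⟨h1, h2, h3⟩ := A.assoc x c (A.compl y) hc hD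
  rw [A.oplus_compl y] at h3
  have hcx : A.oplus c (A.compl y) = A.compl x := A.compl_unique x _ h2 h3.symm
  refine ⟨c, A.D_comm _ _ h1, ?_⟩
  rw [A.oplus_comm (A.compl y) c (A.D_comm _ _ h1), hcx]

lemma le_compl_iff {x y : E} : A.le x y ↔ A.le (A.compl y) (A.compl x) := by
  constructor
  · exact A.compl_le_compl
  · intro h
    have := A.compl_le_compl h
    rwa [A.compl_compl', A.compl_compl'] at this

/-- The complement of a sharp element is sharp. -/
lemma sharp_compl {w : E} (h : A.Sharp w) : A.Sharp (A.compl w) := by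
  unfold Sharp IsInfIn at *
  rw [A.compl_compl', Set.pair_comm (A.compl w) w]
  exact h

end EffectAlgebra

/-- In an S-dominating effect algebra, a join of sharp elements computed in
`S(E)` is also their join in `E`. -/
theorem stmt5 {E : Type u} (A : EffectAlgebra E) (hSD : A.SDominating)
    (S : Set E) (hS : S ⊆ A.sharpSet) (z : E)
    (hz : A.IsSupIn A.sharpSet S z) :
    A.IsSupIn Set.univ S z := by
  obtain ⟨hzS, hzUB, hzlub⟩ := hz
  refine ⟨Set.mem_univ z, hzUB, ?_⟩
  intro u _ hu
  -- take the sharp cover `w` of `u'`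
  obtain ⟨w, hwSharp, huw, hwInf, -⟩ := hSD.1 (A.compl u)
  -- `w'` is an upper bound of `S`
  have hwUB : A.IsUB S (A.compl w) := by
    intro s hsS
    have hsSharp : A.Sharp s := hS hsS
    have hus : A.le (A.compl u) (A.compl s) := A.compl_le_compl (hu s hsS)
    have hws : A.le w (A.compl s) :=
      hwInf.2.1 (A.compl s) ⟨A.sharp_compl hsSharp, hus⟩
    have := A.compl_le_compl hws
    rwa [A.compl_compl'] at this
  -- `z ≤ w'` since `w'` is sharp
  have hzw : A.le z (A.compl w) := hzlub (A.compl w) (A.sharp_compl hwSharp) hwUB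
  -- `w' ≤ u`
  have hwu : A.le (A.compl w) u := by
    have := A.compl_le_compl huw
    rwa [A.compl_compl'] at this
  exact A.le_trans hzw hwu
end

section
/- If E is a sharply dominating lattice effect algebra, then S(E) is bifull in E. -/
universe u v

namespace Stmt7Aux

open EffectAlgebra

variable {E : Type u} {A : EffectAlgebra E}

lemma compl_compl' (x : E) : A.compl (A.compl x) = x := by
  have hD := A.D_comm _ _ (A.D_compl x)
  have h1 : A.oplus (A.compl x) x = A.one := by
    rw [← A.oplus_comm x _ (A.D_compl x)]; exact A.oplus_compl x
  exact (A.compl_unique _ _ hD h1).symm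

lemma cancel {x a b : E} (ha : A.D x a) (hb : A.D x b)
    (h : A.oplus x a = A.oplus x b) : a = b := by
  have h1 : A.D (A.oplus x a) (A.compl (A.oplus x a)) := A.D_compl _
  have h1' : A.D (A.compl (A.oplus x a)) (A.oplus x a) := A.D_comm _ _ h1
  have h2 : A.oplus (A.compl (A.oplus x a)) (A.oplus x a) = A.one := by
    rw [← A.oplus_comm _ _ h1]; exact A.oplus_compl _
  obtain ⟨hcx, hcxa, hassoc⟩ := A.assoc' (A.compl (A.oplus x a)) x a ha h1'
  have ha' : a = A.compl (A.oplus (A.compl (A.oplus x a)) x) :=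
    A.compl_unique _ _ hcxa (by rw [hassoc, h2])
  have h1b : A.D (A.compl (A.oplus x a)) (A.oplus x b) := by rw [← h]; exact h1'
  obtain ⟨hcx2, hcxb, hassoc2⟩ := A.assoc' (A.compl (A.oplus x a)) x b hb h1b
  have hb' : b = A.compl (A.oplus (A.compl (A.oplus x a)) x) :=
    A.compl_unique _ _ hcxb (by rw [hassoc2, ← h, h2])
  rw [ha', hb']

lemma compl_one : A.compl A.one = A.zero := A.one_max _ (A.D_compl A.one)

lemma D_one_zero : A.D A.one A.zero := compl_one ▸ A.D_compl A.one

lemma D_zero_one : A.D A.zero A.one := A.D_comm _ _ D_one_zero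

lemma oplus_one_zero : A.oplus A.one A.zero = A.one := compl_one ▸ A.oplus_compl A.one

lemma D_oplus_zero (x : E) : A.D x A.zero ∧ A.oplus x A.zero = x := by
  suffices h : ∀ y : E, A.D (A.compl y) A.zero ∧ A.oplus (A.compl y) A.zero = A.compl y by
    have := h (A.compl x); rwa [compl_compl'] at this
  intro y
  have hD1 : A.D y (A.compl y) := A.D_compl y
  have hD2 : A.D (A.oplus y (A.compl y)) A.zero := by rw [A.oplus_compl]; exact D_one_zero
  obtain ⟨h1, h2, h3⟩ := A.assoc y (A.compl y) A.zero hD1 hD2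
  have heq : A.oplus y (A.oplus (A.compl y) A.zero) = A.oplus y (A.compl y) := by
    rw [← h3, A.oplus_compl, oplus_one_zero]
  exact ⟨h1, cancel h2 hD1 heq⟩

lemma le_refl' (x : E) : A.le x x := ⟨A.zero, (D_oplus_zero x).1, (D_oplus_zero x).2⟩

lemma zero_oplus (x : E) : A.D A.zero x ∧ A.oplus A.zero x = x := by
  obtain ⟨hD, hE⟩ := D_oplus_zero (A := A) x
  exact ⟨A.D_comm _ _ hD, by rw [← A.oplus_comm _ _ hD, hE]⟩

lemma zero_le (x : E) : A.le A.zero x := ⟨x, (zero_oplus x).1, (zero_oplus x).2⟩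

lemma eq_zero_of_le_zero {z : E} (h : A.le z A.zero) : z = A.zero := by
  obtain ⟨e, hD, hE⟩ := h
  have hD1 : A.D (A.oplus z e) A.one := by rw [hE]; exact D_zero_one
  obtain ⟨h1, h2, h3⟩ := A.assoc z e A.one hD hD1
  have he : e = A.zero := A.one_max e (A.D_comm _ _ h1)
  calc z = A.oplus z A.zero := ((D_oplus_zero z).2).symm
    _ = A.oplus z e := by rw [he]
    _ = A.zero := hE

lemma le_trans' {x y z : E} (h1 : A.le x y) (h2 : A.le y z) : A.le x z := by
  obtain ⟨a, hDa, ha⟩ := h1; obtain ⟨b, hDb, hb⟩ := h2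
  subst ha
  obtain ⟨h3, h4, h5⟩ := A.assoc x a b hDa hDb
  exact ⟨_, h4, by rw [← h5, hb]⟩

lemma le_antisymm' {x y : E} (h1 : A.le x y) (h2 : A.le y x) : x = y := by
  obtain ⟨a, hDa, ha⟩ := h1; obtain ⟨b, hDb, hb⟩ := h2
  subst ha
  obtain ⟨h3, h4, h5⟩ := A.assoc x a b hDa hDb
  have hab : A.oplus x (A.oplus a b) = A.oplus x A.zero := by
    rw [← h5, hb, (D_oplus_zero x).2]
  have h0 : A.oplus a b = A.zero := cancel h4 (D_oplus_zero x).1 hab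
  have ha0 : a = A.zero := eq_zero_of_le_zero ⟨b, h3, h0⟩
  rw [ha0, (D_oplus_zero x).2]

lemma sub_compl {a b c : E} (hD : A.D a b) (h : A.oplus a b = c) :
    A.D b (A.compl c) ∧ A.oplus b (A.compl c) = A.compl a := by
  have h1 : A.D (A.oplus a b) (A.compl c) := by rw [h]; exact A.D_compl c
  obtain ⟨h2, h3, h4⟩ := A.assoc a b (A.compl c) hD h1
  refine ⟨h2, A.compl_unique a _ h3 ?_⟩
  rw [← h4, h, A.oplus_compl]

lemma le_compl_right {a b : E} (hD : A.D a b) : A.le a (A.compl b) := by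
  obtain ⟨h1, h2⟩ := sub_compl (A.D_comm _ _ hD) rfl
  exact ⟨_, h1, h2⟩

lemma D_of_le_compl {a b : E} (h : A.le a (A.compl b)) : A.D a b := by
  obtain ⟨e, hD, hE⟩ := h
  have h1 : A.D (A.oplus a e) b := by
    rw [hE]; exact A.D_comm _ _ (A.D_compl b)
  obtain ⟨h2, h3, h4⟩ := A.assoc a e b hD h1
  have h5 : A.D a (A.oplus b e) := by
    rw [← A.oplus_comm _ _ h2]; exact h3
  exact (A.assoc' a b e (A.D_comm _ _ h2) h5).1

lemma compl_antitone {x y : E} (h : A.le x y) : A.le (A.compl y) (A.compl x) := by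
  obtain ⟨a, hD, hE⟩ := h
  obtain ⟨h1, h2⟩ := sub_compl hD hE
  exact ⟨a, A.D_comm _ _ h1, by rw [← A.oplus_comm _ _ h1, h2]⟩

lemma le_oplus_left {x y : E} (hD : A.D x y) : A.le x (A.oplus x y) := ⟨y, hD, rfl⟩

lemma le_oplus_right {x y : E} (hD : A.D x y) : A.le y (A.oplus x y) :=
  ⟨x, A.D_comm _ _ hD, (A.oplus_comm _ _ hD).symm⟩

lemma oplus_le_oplus {a b x : E} (h : A.le a b) (hD : A.D b x) :
    A.D a x ∧ A.le (A.oplus a x) (A.oplus b x) := by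
  obtain ⟨e, hDe, hE⟩ := h
  have h1 : A.D (A.oplus a e) x := by rw [hE]; exact hD
  obtain ⟨h2, h3, h4⟩ := A.assoc a e x hDe h1
  have h5 : A.D a (A.oplus x e) := by
    rw [A.oplus_comm _ _ (A.D_comm _ _ h2)]; exact h3
  obtain ⟨h6, h7, h8⟩ := A.assoc' a x e (A.D_comm _ _ h2) h5
  refine ⟨h6, e, h7, ?_⟩
  rw [h8, A.oplus_comm _ _ (A.D_comm _ _ h2), ← h4, hE]

lemma le_of_oplus_le {x a b : E} (ha : A.D x a) (hb : A.D x b)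
    (h : A.le (A.oplus x a) (A.oplus x b)) : A.le a b := by
  obtain ⟨r, hDr, hE⟩ := h
  obtain ⟨h1, h2, h3⟩ := A.assoc x a r ha hDr
  have heq : A.oplus x (A.oplus a r) = A.oplus x b := by rw [← h3, hE]
  exact ⟨r, h1, cancel h2 hb heq⟩

lemma sharp_compl {x : E} (hx : A.Sharp x) : A.Sharp (A.compl x) := by
  refine ⟨Set.mem_univ _, fun w _ => zero_le w, ?_⟩
  intro z _ hz
  apply hx.2.2 z (Set.mem_univ _)
  intro w hw
  simp only [Set.mem_insert_iff, Set.mem_singleton_iff] at hw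
  rcases hw with rfl | rfl
  · have := hz _ (Set.mem_insert_of_mem _ rfl)
    rwa [compl_compl'] at this
  · exact hz _ (Set.mem_insert _ _)

lemma sharp_oplus (hL : A.LatticeOrdered) {x y : E} (hx : A.Sharp x) (hy : A.Sharp y)
    (hD : A.D x y) : A.Sharp (A.oplus x y) := by
  refine ⟨Set.mem_univ _, fun w _ => zero_le w, ?_⟩
  intro z _ hz
  have hzu : A.le z (A.oplus x y) := hz _ (Set.mem_insert _ _)
  have hzu' : A.le z (A.compl (A.oplus x y)) := hz _ (Set.mem_insert_of_mem _ rfl)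
  have hxu : A.le x (A.oplus x y) := le_oplus_left hD
  have hyu : A.le y (A.oplus x y) := le_oplus_right hD
  have hzx' : A.le z (A.compl x) := le_trans' hzu' (compl_antitone hxu)
  have hzy' : A.le z (A.compl y) := le_trans' hzu' (compl_antitone hyu)
  have hDzx : A.D z x := D_of_le_compl hzx'
  have hDxz : A.D x z := A.D_comm _ _ hDzx
  obtain ⟨m, hm⟩ := (hL z y).1
  have hm0 : m = A.zero := by
    apply eq_zero_of_le_zero
    apply hy.2.2 m (Set.mem_univ _)
    intro w hw
    simp only [Set.mem_insert_iff, Set.mem_singleton_iff] at hw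
    rcases hw with rfl | rfl
    · exact hm.2.1 _ (Set.mem_insert_of_mem _ rfl)
    · exact le_trans' (hm.2.1 _ (Set.mem_insert _ _)) hzy'
  obtain ⟨j, hj⟩ := (hL z x).2
  have hxj : A.le x j := hj.2.1 x (Set.mem_insert_of_mem _ rfl)
  have hzj : A.le z j := hj.2.1 z (Set.mem_insert _ _)
  obtain ⟨d, hDxd, hxd⟩ := hxj
  have hjzx : A.le j (A.oplus x z) := by
    apply hj.2.2 _ (Set.mem_univ _)
    intro w hw
    simp only [Set.mem_insert_iff, Set.mem_singleton_iff] at hw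
    rcases hw with rfl | rfl
    · exact le_oplus_right hDxz
    · exact le_oplus_left hDxz
  have hjxy : A.le j (A.oplus x y) := by
    apply hj.2.2 _ (Set.mem_univ _)
    intro w hw
    simp only [Set.mem_insert_iff, Set.mem_singleton_iff] at hw
    rcases hw with rfl | rfl
    · exact hzu
    · exact hxu
  have hdz : A.le d z := le_of_oplus_le hDxd hDxz (by rw [hxd]; exact hjzx)
  have hdy : A.le d y := le_of_oplus_le hDxd hD (by rw [hxd]; exact hjxy)
  have hdm : A.le d m := by
    apply hm.2.2 d (Set.mem_univ _)
    intro w hw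
    simp only [Set.mem_insert_iff, Set.mem_singleton_iff] at hw
    rcases hw with rfl | rfl
    · exact hdz
    · exact hdy
  have hmz : A.le m z := hm.2.1 _ (Set.mem_insert _ _)
  have hDmx : A.D m x := D_of_le_compl (le_trans' hmz hzx')
  have hzmx : A.le z (A.oplus m x) := by
    have h1 := (oplus_le_oplus hdm hDmx).2
    have h2 : A.le z (A.oplus d x) := by
      rw [A.oplus_comm _ _ (A.D_comm _ _ hDxd), hxd]; exact hzj
    exact le_trans' h2 h1
  have hzx : A.le z x := by
    rw [hm0, (zero_oplus x).2] at hzmx; exact hzmx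
  apply hx.2.2 z (Set.mem_univ _)
  intro w hw
  simp only [Set.mem_insert_iff, Set.mem_singleton_iff] at hw
  rcases hw with rfl | rfl
  · exact hzx
  · exact hzx'

end Stmt7Aux

open Stmt7Aux

/-- If `E` is a sharply dominating lattice effect algebra then `S(E)` is bifull
in `E`. -/
theorem stmt7 {E : Type u} (A : EffectAlgebra E) (hL : A.LatticeOrdered)
    (hSD : A.SharplyDominating) :
    A.Bifull A.sharpSet := by
  intro S hS
  constructor
  · -- sup in S(E) → sup in E
    rintro s ⟨hsSharp, hsUB, hsLeast⟩
    refine ⟨Set.mem_univ _, hsUB, ?_⟩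
    intro z _ hzUB
    obtain ⟨v, hvS, hvge, hvinf, -⟩ := hSD (A.compl z)
    have huz : A.le (A.compl v) z := by
      have := compl_antitone hvge
      rwa [compl_compl'] at this
    have hub : A.IsUB S (A.compl v) := by
      intro x hx
      have hxs : A.Sharp x := hS hx
      have h1 : A.le (A.compl z) (A.compl x) := compl_antitone (hzUB x hx)
      have h2 : A.le v (A.compl x) := hvinf.2.1 _ ⟨sharp_compl hxs, h1⟩
      have h3 := compl_antitone h2
      rwa [compl_compl'] at h3
    exact le_trans' (hsLeast _ (sharp_compl hvS) hub) huz
  · -- sup in E → sup in S(E)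
    rintro s ⟨-, hsUB, hsLeast⟩
    obtain ⟨sh, hshS, hsle, hshinf, -⟩ := hSD s
    obtain ⟨t, hDst, hst⟩ := hsle
    obtain ⟨th, hthS, htle, hthinf, -⟩ := hSD t
    obtain ⟨hDtsh', hts'⟩ := sub_compl hDst hst
    -- hDtsh' : D t sh', hts' : t ⊕ sh' = s'
    have htsh : A.le t sh := hst ▸ le_oplus_right hDst
    have hthsh : A.le th sh := hthinf.2.1 _ ⟨hshS, htsh⟩
    have hDthsh' : A.D th (A.compl sh) :=
      D_of_le_compl (by rw [compl_compl']; exact hthsh)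
    -- q := compl (th ⊕ sh') is an upper bound of S
    have hq : A.IsUB S (A.compl (A.oplus th (A.compl sh))) := by
      intro x hx
      have hxs : A.Sharp x := hS hx
      obtain ⟨e, hDxe, hxe⟩ := hsUB x hx
      have hD1 : A.D (A.oplus x e) t := by rw [hxe]; exact hDst
      obtain ⟨hDet, hDxr, hassoc⟩ := A.assoc x e t hDxe hD1
      have hxr : A.oplus x (A.oplus e t) = sh := by rw [← hassoc, hxe, hst]
      -- r := e ⊕ t is sharp, since compl r = x ⊕ sh'
      obtain ⟨hDxsh', hxsh'⟩ := sub_compl (A.D_comm _ _ hDxr)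
        ((A.oplus_comm _ _ hDxr).symm.trans hxr)
      have hrS : A.Sharp (A.oplus e t) := by
        have h1 : A.Sharp (A.oplus x (A.compl sh)) :=
          sharp_oplus hL hxs (sharp_compl hshS) hDxsh'
        have h2 := sharp_compl h1
        rwa [hxsh', compl_compl'] at h2
      have hthr : A.le th (A.oplus e t) := hthinf.2.1 _ ⟨hrS, le_oplus_right hDet⟩
      obtain ⟨hDr, hrc⟩ := sub_compl hDxr hxr
      have hmono := (oplus_le_oplus hthr hDr).2
      rw [hrc] at hmono
      have h3 := compl_antitone hmono
      rwa [compl_compl'] at h3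
    have hsq : A.le s (A.compl (A.oplus th (A.compl sh))) := hsLeast _ (Set.mem_univ _) hq
    have h1 : A.le (A.oplus th (A.compl sh)) (A.oplus t (A.compl sh)) := by
      have h2 := compl_antitone hsq
      rw [compl_compl'] at h2
      rwa [← hts'] at h2
    have hth_t : A.le th t := by
      apply le_of_oplus_le (A.D_comm _ _ hDthsh') (A.D_comm _ _ hDtsh')
      rw [← A.oplus_comm _ _ hDthsh', ← A.oplus_comm _ _ hDtsh']
      exact h1
    have hteq : t = th := le_antisymm' htle hth_t
    have hs'S : A.Sharp (A.compl s) := by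
      rw [← hts']
      exact sharp_oplus hL (show A.Sharp t by rw [hteq]; exact hthS)
        (sharp_compl hshS) hDtsh'
    have hsS : A.Sharp s := by
      have := sharp_compl hs'S
      rwa [compl_compl'] at this
    exact ⟨hsS, hsUB, fun z _ hzUB => hsLeast z (Set.mem_univ _) hzUB⟩
end
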